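/- Let G be a finite p-group, U a cyclic normal subgroup of G, and H a subgroup containing U. Let C(H) be the set of cyclic subgroups V of H with U ≤ V and (V : U) = p, and C'(H) the subset of those V ∈ C(H) that are normal in H. Then |C(H)| ≡ |C'(H)| (mod p). -/

import Mathlib

open Pointwise MulAction

theorem artin_stmt2 {G : Type*} [Group G] [Finite G] {p : ℕ}
    (hp : p.Prime) (hG : IsPGroup p G) (U H : Subgroup G) [U.Normal]
    (hUc : IsCyclic U) (hUH : U ≤ H) :
    Nat.card {V : Subgroup G | V ≤ H ∧ IsCyclic ↥V ∧ U ≤ V ∧ U.relIndex V = p} ≡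
      Nat.card {V : Subgroup G | V ≤ H ∧ IsCyclic ↥V ∧ U ≤ V ∧ U.relIndex V = p ∧
        (V.subgroupOf H).Normal} [MOD p] := by
  classical
  haveI : Fact p.Prime := ⟨hp⟩
  set S : Set (Subgroup G) :=
    {V : Subgroup G | V ≤ H ∧ IsCyclic ↥V ∧ U ≤ V ∧ U.relIndex V = p} with hSdef
  have hU : U.Normal := inferInstance
  -- conjugation fixes U pointwise-comap
  have hUfix : ∀ g : G, U.comap (MulDistribMulAction.toMonoidEnd (MulAut G) G
      (MulAut.conj g)) = U := by
    intro g
    ext x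
    change g * x * g⁻¹ ∈ U ↔ x ∈ U
    constructor
    · intro hx
      have := hU.conj_mem _ hx g⁻¹
      simpa [mul_assoc] using this
    · intro hx
      exact hU.conj_mem _ hx g
  -- invariance of S under conjugation by elements of H
  have hsmulmem : ∀ (h : H) (V : Subgroup G), V ∈ S → MulAut.conj (h : G) • V ∈ S := by
    rintro h V ⟨hVH, hVc, hUV, hrel⟩
    refine ⟨Subgroup.conj_smul_le_of_le hVH h, ?_, ?_, ?_⟩
    · exact isCyclic_of_surjective _ (Subgroup.equivSMul (MulAut.conj (h : G)) V).surjective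
    · calc U = MulAut.conj (h : G) • U := (Subgroup.Normal.conj_smul_eq_self _ _).symm
        _ ≤ MulAut.conj (h : G) • V := Subgroup.pointwise_smul_le_pointwise_smul_iff.mpr hUV
    · rw [Subgroup.pointwise_smul_def]
      have e := Subgroup.relIndex_comap (H := U)
        (MulDistribMulAction.toMonoidEnd (MulAut G) G (MulAut.conj (h : G))) V
      rw [hUfix] at e
      exact e.symm.trans hrel
  -- the action of H on S
  letI act : MulAction H (Subgroup G) := MulAction.compHom _ (MulAut.conj.comp H.subtype)
  have smul_def : ∀ (h : H) (V : Subgroup G), h • V = MulAut.conj (h : G) • V :=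
    fun _ _ => rfl
  let sub : SubMulAction H (Subgroup G) :=
    { carrier := S, smul_mem' := fun h {V} hV => hsmulmem h V hV }
  letI : MulAction H sub := sub.mulAction'
  have hfin : Finite (Subgroup G) := Finite.of_injective _ SetLike.coe_injective
  have key : Nat.card sub ≡ Nat.card (fixedPoints H sub) [MOD p] :=
    (IsPGroup.to_subgroup hG H).card_modEq_card_fixedPoints sub
  -- identify Nat.card sub with the first set
  have h1 : Nat.card {V : Subgroup G | V ≤ H ∧ IsCyclic ↥V ∧ U ≤ V ∧ U.relIndex V = p} =
      Nat.card sub := rfl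
  -- identify fixed points with the second set
  have h2 : Nat.card (fixedPoints H sub) =
      Nat.card {V : Subgroup G | V ≤ H ∧ IsCyclic ↥V ∧ U ≤ V ∧ U.relIndex V = p ∧
        (V.subgroupOf H).Normal} := by
    apply Nat.card_congr
    refine ⟨fun x => ⟨x.1.1, ?_⟩, fun V => ⟨⟨V.1, ?_⟩, ?_⟩, ?_, ?_⟩
    · obtain ⟨hVH, hVc, hUV, hrel⟩ := x.1.2
      refine ⟨hVH, hVc, hUV, hrel, ?_⟩
      constructor
      intro n hn g
      have hfix : MulAut.conj ((g : G)) • (x.1.1 : Subgroup G) = x.1.1 := by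
        have := x.2 g
        have := congrArg (Subtype.val) this
        rw [SubMulAction.val_smul] at this
        exact this
      have : (g : G) * (n : G) * (g : G)⁻¹ ∈ MulAut.conj ((g : G)) • (x.1.1 : Subgroup G) :=
        Subgroup.smul_mem_pointwise_smul _ _ _ hn
      rw [hfix] at this
      exact this
    · exact ⟨V.2.1, V.2.2.1, V.2.2.2.1, V.2.2.2.2.1⟩
    · -- fixed point property from normality
      intro g
      ext1
      rw [SubMulAction.val_smul]
      show MulAut.conj ((g : G)) • V.1 = V.1
      have hnorm := V.2.2.2.2.2
      have hle : ∀ g : H, MulAut.conj ((g : G)) • V.1 ≤ V.1 := by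
        rintro g - ⟨v, hv, rfl⟩
        have hvH : v ∈ H := V.2.1 hv
        have := hnorm.conj_mem ⟨v, hvH⟩ hv g
        exact this
      refine le_antisymm (hle g) ?_
      have := hle g⁻¹
      calc V.1 = MulAut.conj ((g : G)) • (MulAut.conj (((g⁻¹ : H) : G)) • V.1) := by
            rw [smul_smul, ← map_mul]
            simp
        _ ≤ MulAut.conj ((g : G)) • V.1 :=
            Subgroup.pointwise_smul_le_pointwise_smul_iff.mpr this
    · intro x; ext1; rfl
    · intro V; rfl
  rw [h1, ← h2]
  exact key
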